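/- Let $W$ be a Weyl group, $k$ a minuscule index, and define a sequence of indices $i_0 = k$, $i_{-1} = \is$ for some fixed $\is \neq k$, and $i_j = \sigma_{i_{j-1}}(i_{j-2})$ where $\sigma_j$ is the Dynkin involution of the diagram with node $j$ deleted. For $j \geq 1$ let $u_{i_j} \in W_{i_j}$ be the shortest element with $u_{i_j}(\omega_{i_{j-1}}^\vee) = w_{0,i_j}(\omega_{i_{j-1}}^\vee)$. Then for every $j \in \{1, \dots, c_\is\}$ (where $c_\is = \langle \omega_\is^\vee, \theta\rangle$), the product $u_{i_j}u_{i_{j-1}}\cdots u_{i_1}$ is a minimal-length coset representative in $W/W_k$ and satisfies $u_{i_j}\cdots u_{i_1}(\omega_k^\vee) = -\omega_{i_{j+1}}^\vee + \omega_{i_j}^\vee$. -/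

import Mathlib

open scoped BigOperators

/-- `prodU u j = u j * u (j-1) * ⋯ * u 1`. -/
def prodU {W : Type*} [Group W] (u : ℕ → W) : ℕ → W
  | 0 => 1
  | (j + 1) => u (j + 1) * prodU u (j : ℕ)

open CoxeterSystem List

namespace StrongExch

theorem conj_eq_iff {W : Type*} [Group W] (g t c : W) :
    g * t * g⁻¹ = c ↔ t = g⁻¹ * c * g := by
  constructor
  · intro h; rw [← h]; group
  · intro h; rw [h]; group

variable {B : Type*} {W : Type*} [Group W] {M : CoxeterMatrix B} (cs : CoxeterSystem M W)

local prefix:100 "s" => cs.simple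
local prefix:100 "π" => cs.wordProd
local prefix:100 "ℓ" => cs.length

open Classical in
/-- The sign-cocycle involution attached to a generator. -/
noncomputable def sgnFun (i : B) : W × ℤˣ → W × ℤˣ :=
  fun p => (s i * p.1 * s i, if p.1 = s i then -p.2 else p.2)

theorem sgnFun_invol (i : B) : Function.Involutive (sgnFun cs i) := by
  rintro ⟨w, ε⟩
  unfold sgnFun
  simp only
  have h1 : s i * (s i * w * s i) * s i = w := by
    rw [← mul_assoc, ← mul_assoc, cs.simple_mul_simple_self, one_mul, mul_assoc,
      cs.simple_mul_simple_self, mul_one]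
  have h2 : (s i * w * s i = s i) ↔ (w = s i) := by
    constructor
    · intro h; rw [← h1, h, cs.simple_mul_simple_self, one_mul]
    · intro h; rw [h, cs.simple_mul_simple_self, one_mul]
  by_cases h : w = s i
  · simp [h, h1, h2]
  · simp [h, h1, h2]

/-- The sign-cocycle permutation attached to a generator. -/
noncomputable def sgnPerm (i : B) : Equiv.Perm (W × ℤˣ) := (sgnFun_invol cs i).toPerm

open Classical in
theorem sgnPerm_apply (i : B) (p : W × ℤˣ) :
    sgnPerm cs i p = (s i * p.1 * s i, if p.1 = s i then -p.2 else p.2) := rfl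

theorem sgnPerm_liftable : M.IsLiftable (sgnPerm cs) := by
  classical
  intro i j
  set p : W := s i * s j with hp
  have idA : ∀ a : ℕ, s j * p ^ a = p⁻¹ ^ a * s j := by
    intro a
    induction a with
    | zero => simp
    | succ a ih =>
      have h1 : s j * p = p⁻¹ * s j := by
        rw [hp, mul_inv_rev, cs.inv_simple, cs.inv_simple, ← mul_assoc]
      calc s j * p ^ (a+1) = (s j * p ^ a) * p := by rw [pow_succ, mul_assoc]
        _ = p⁻¹ ^ a * (s j * p) := by rw [ih, mul_assoc]
        _ = p⁻¹ ^ a * (p⁻¹ * s j) := by rw [h1]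
        _ = p⁻¹ ^ (a+1) * s j := by rw [pow_succ, mul_assoc]
  have hsisj : s j * s i * s j = p⁻¹ * s j := by
    rw [hp, mul_inv_rev, cs.inv_simple, cs.inv_simple, mul_assoc]
  have val1 : ∀ a : ℕ, (p ^ a)⁻¹ * s j * p ^ a = p⁻¹ ^ (2*a) * s j := by
    intro a
    rw [mul_assoc, idA, ← inv_pow, ← mul_assoc, ← pow_add, two_mul]
  have val2 : ∀ a : ℕ, (p ^ a)⁻¹ * (s j * s i * s j) * p ^ a = p⁻¹ ^ (2*a+1) * s j := by
    intro a
    rw [hsisj]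
    rw [show (p ^ a)⁻¹ * (p⁻¹ * s j) * p ^ a = (p ^ a)⁻¹ * p⁻¹ * (s j * p ^ a) by group]
    rw [idA, ← inv_pow, ← mul_assoc, ← pow_succ, ← pow_add]
    congr 2
    omega
  set g : W → ℕ → ℤˣ := fun t c => if t = p⁻¹ ^ c * s j then -1 else 1 with hg
  have step : ∀ (a : ℕ) (t : W) (ε : ℤˣ),
      ((sgnPerm cs i * sgnPerm cs j) ^ a) (t, ε)
        = (p ^ a * t * (p ^ a)⁻¹, ε * ∏ c ∈ Finset.range (2*a), g t c) := by
    intro a t ε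
    induction a with
    | zero => simp
    | succ a ih =>
      rw [pow_succ', Equiv.Perm.mul_apply, ih]
      rw [Equiv.Perm.mul_apply, sgnPerm_apply, sgnPerm_apply]
      simp only
      have c1 : (p ^ a * t * (p ^ a)⁻¹ = s j) ↔ (t = p⁻¹ ^ (2*a) * s j) := by
        rw [conj_eq_iff, val1]
      have c2 : (s j * (p ^ a * t * (p ^ a)⁻¹) * s j = s i) ↔ (t = p⁻¹ ^ (2*a+1) * s j) := by
        rw [show s j * (p ^ a * t * (p ^ a)⁻¹) * s j = s j * (p ^ a * t * (p ^ a)⁻¹) * (s j)⁻¹ by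
          rw [cs.inv_simple], conj_eq_iff, cs.inv_simple, conj_eq_iff, val2]
      rw [Prod.ext_iff]
      refine ⟨?_, ?_⟩
      · show s i * (s j * (p ^ a * t * (p ^ a)⁻¹) * s j) * s i = p ^ (a+1) * t * (p ^ (a+1))⁻¹
        rw [show p ^ (a+1) * t * (p ^ (a+1))⁻¹ = p * (p ^ a * t * (p ^ a)⁻¹) * p⁻¹ by
          rw [pow_succ']; group]
        rw [hp, mul_inv_rev, cs.inv_simple, cs.inv_simple]
        group
      · show (if s j * (p ^ a * t * (p ^ a)⁻¹) * s j = s i then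
            -(if p ^ a * t * (p ^ a)⁻¹ = s j then -(ε * ∏ c ∈ Finset.range (2*a), g t c)
              else ε * ∏ c ∈ Finset.range (2*a), g t c)
            else (if p ^ a * t * (p ^ a)⁻¹ = s j then -(ε * ∏ c ∈ Finset.range (2*a), g t c)
              else ε * ∏ c ∈ Finset.range (2*a), g t c))
          = ε * ∏ c ∈ Finset.range (2*(a+1)), g t c
        rw [show 2*(a+1) = 2*a + 1 + 1 by omega, Finset.prod_range_succ, Finset.prod_range_succ]
        simp only [c1, c2, hg]
        by_cases h1 : t = p⁻¹ ^ (2*a) * s j <;> by_cases h2 : t = p⁻¹ ^ (2*a+1) * s j <;>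
          simp [h1, h2] <;> ring
  have hpm : p ^ M.M i j = 1 := cs.simple_mul_simple_pow i j
  apply Equiv.ext
  rintro ⟨t, ε⟩
  rw [step]
  have h1 : (1 : Equiv.Perm (W × ℤˣ)) (t, ε) = (t, ε) := rfl
  rw [h1, Prod.ext_iff]
  refine ⟨by rw [hpm]; simp, ?_⟩
  simp only
  have periodic : ∀ c, g t (M.M i j + c) = g t c := by
    intro c
    simp only [hg]
    have : p⁻¹ ^ (M.M i j + c) = p⁻¹ ^ c := by
      rw [pow_add, inv_pow, hpm]; simp
    rw [this]
  have hsplit : ∏ c ∈ Finset.range (2 * M.M i j), g t c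
      = (∏ c ∈ Finset.range (M.M i j), g t c) * ∏ c ∈ Finset.range (M.M i j), g t (M.M i j + c) := by
    rw [two_mul, Finset.prod_range_add]
  rw [hsplit]
  conv_lhs => rw [Finset.prod_congr rfl (fun c _ => periodic c)]
  rw [← sq, Int.units_sq, mul_one]

-- continuing namespace StrongExch, same variables
/-- The sign homomorphism `W →* Perm (W × ℤˣ)`. -/
noncomputable def sgnHom : W →* Equiv.Perm (W × ℤˣ) :=
  cs.lift ⟨sgnPerm cs, sgnPerm_liftable cs⟩

theorem sgnHom_simple (i : B) : sgnHom cs (s i) = sgnPerm cs i :=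
  cs.lift_apply_simple _ i

open Classical in
theorem sgnHom_wordProd (ω : List B) (t : W) (ε : ℤˣ) :
    sgnHom cs (π ω) (t, ε)
      = (π ω * t * (π ω)⁻¹,
         ε * ((cs.rightInvSeq ω).map (fun r => if r = t then (-1 : ℤˣ) else 1)).prod) := by
  induction ω with
  | nil => simp [cs.wordProd_nil]
  | cons i ω ih =>
    rw [cs.wordProd_cons, map_mul, Equiv.Perm.mul_apply, ih, sgnHom_simple, sgnPerm_apply]
    simp only
    have hris : cs.rightInvSeq (i :: ω) = ((π ω)⁻¹ * s i * π ω) :: cs.rightInvSeq ω := rfl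
    rw [hris, List.map_cons, List.prod_cons, Prod.ext_iff]
    constructor
    · show s i * (π ω * t * (π ω)⁻¹) * s i = (s i * π ω) * t * (s i * π ω)⁻¹
      rw [mul_inv_rev, cs.inv_simple]
      group
    · show (if π ω * t * (π ω)⁻¹ = s i then
          -(ε * ((cs.rightInvSeq ω).map (fun r => if r = t then (-1 : ℤˣ) else 1)).prod)
          else ε * ((cs.rightInvSeq ω).map (fun r => if r = t then (-1 : ℤˣ) else 1)).prod)
        = ε * ((if (π ω)⁻¹ * s i * π ω = t then (-1:ℤˣ) else 1)
            * ((cs.rightInvSeq ω).map (fun r => if r = t then (-1 : ℤˣ) else 1)).prod)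
      have hiff : (π ω * t * (π ω)⁻¹ = s i) ↔ ((π ω)⁻¹ * s i * π ω = t) := by
        rw [conj_eq_iff]; exact eq_comm
      by_cases h : π ω * t * (π ω)⁻¹ = s i
      · rw [if_pos h, if_pos (hiff.mp h)]; simp [mul_neg, neg_mul]
      · rw [if_neg h, if_neg (fun hc => h (hiff.mpr hc))]; rw [one_mul]

/-- The sign of a reflection `t` relative to `w`. -/
noncomputable def Sgn (w t : W) : ℤˣ := (sgnHom cs w (t, 1)).2

open Classical in
theorem sgnHom_apply (w t : W) (ε : ℤˣ) :
    sgnHom cs w (t, ε) = (w * t * w⁻¹, ε * Sgn cs w t) := by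
  obtain ⟨ω, -, rfl⟩ := cs.exists_reduced_word' w
  rw [sgnHom_wordProd, Sgn, sgnHom_wordProd]
  simp [mul_comm]

open Classical in
theorem sgn_wordProd (ω : List B) (t : W) :
    Sgn cs (π ω) t = ((cs.rightInvSeq ω).map (fun r => if r = t then (-1 : ℤˣ) else 1)).prod := by
  rw [Sgn, sgnHom_wordProd, one_mul]

theorem sgn_eq_one_of_not_mem (ω : List B) (t : W) (h : t ∉ cs.rightInvSeq ω) :
    Sgn cs (π ω) t = 1 := by
  classical
  rw [sgn_wordProd]
  apply List.prod_eq_one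
  intro x hx
  rw [List.mem_map] at hx
  obtain ⟨r, hr, rfl⟩ := hx
  rw [if_neg]
  rintro rfl
  exact h hr

theorem sgn_reflection_self {t : W} (ht : cs.IsReflection t) : Sgn cs t t = -1 := by
  classical
  obtain ⟨v, a, rfl⟩ := ht
  obtain ⟨γ, -, rfl⟩ := cs.exists_reduced_word' v
  clear * -
  induction γ with
  | nil =>
    simp only [cs.wordProd_nil, one_mul, inv_one, mul_one]
    rw [Sgn, sgnHom_simple, sgnPerm_apply]
    simp [cs.simple_mul_simple_self]
  | cons b γ ih =>
    rw [cs.wordProd_cons]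
    set t' : W := π γ * s a * (π γ)⁻¹ with ht'
    have hconj : s b * π γ * s a * (s b * π γ)⁻¹ = s b * t' * (s b)⁻¹ := by
      rw [ht', mul_inv_rev, cs.inv_simple]
      group
    rw [hconj, cs.inv_simple]
    by_cases hcase : t' = s b
    · rw [hcase, cs.simple_mul_simple_self, one_mul]
      rw [Sgn, sgnHom_simple, sgnPerm_apply]
      simp
    · have hne : s b * t' * s b ≠ s b := by
        intro h
        apply hcase
        have : s b * (s b * t' * s b) * s b = s b * s b * s b := by rw [h]
        rw [← mul_assoc, ← mul_assoc, cs.simple_mul_simple_self, one_mul, mul_assoc,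
          cs.simple_mul_simple_self, mul_one] at this
        rw [this, one_mul]
      set T : W := s b * t' * s b with hT
      have h1 : s b * T * s b = t' := by
        rw [hT, ← mul_assoc, ← mul_assoc, cs.simple_mul_simple_self, one_mul, mul_assoc,
          cs.simple_mul_simple_self, mul_one]
      have step1 : sgnPerm cs b (T, (1 : ℤˣ)) = (t', 1) := by
        rw [sgnPerm_apply, if_neg hne, h1]
      have step2 : sgnHom cs t' (t', (1 : ℤˣ)) = (t', -1) := by
        rw [sgnHom_apply, one_mul, ih]
        congr 1
        rw [ht']
        group
      have step3 : sgnPerm cs b (t', (-1 : ℤˣ)) = (T, -1) := by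
        rw [sgnPerm_apply, if_neg hcase, hT]
      have hdecomp : sgnHom cs T = sgnHom cs (s b) * sgnHom cs t' * sgnHom cs (s b) := by
        rw [← map_mul, ← map_mul, hT]
      rw [Sgn, hdecomp, Equiv.Perm.mul_apply, Equiv.Perm.mul_apply, sgnHom_simple, step1, step2,
        step3]

theorem sgn_mul_self_right (w t : W) (ht : cs.IsReflection t) :
    Sgn cs (w * t) t = - Sgn cs w t := by
  rw [Sgn, map_mul, Equiv.Perm.mul_apply]
  have h1 : sgnHom cs t (t, 1) = (t * t * t⁻¹, Sgn cs t t) := by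
    rw [sgnHom_apply, one_mul]
  rw [h1, sgn_reflection_self cs ht]
  have h2 : t * t * t⁻¹ = t := by group
  rw [h2, sgnHom_apply]
  simp only
  rw [Sgn, neg_one_mul]

/-- Key theorem: `t` is a right inversion of `w` iff the sign is `-1`. -/
theorem isRightInversion_iff_sgn {w t : W} (ht : cs.IsReflection t) :
    cs.length (w * t) < cs.length w ↔ Sgn cs w t = -1 := by
  classical
  constructor
  · intro hlt
    by_contra hne
    have hone : Sgn cs w t = 1 := (Int.units_eq_one_or _).resolve_right (by
      intro h; exact hne h)
    have hminus : Sgn cs (w * t) t = -1 := by rw [sgn_mul_self_right cs _ _ ht, hone]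
    -- then ℓ((w*t)*t) < ℓ(w*t), i.e. ℓ w < ℓ (w*t), contradiction
    obtain ⟨ω, hred, hw⟩ := cs.exists_reduced_word' (w * t)
    have hmem : t ∈ cs.rightInvSeq ω := by
      by_contra hmem
      rw [hw] at hminus
      rw [sgn_eq_one_of_not_mem cs ω t hmem] at hminus
      exact absurd hminus (by decide)
    obtain ⟨jx, hjx, hget⟩ := List.mem_iff_getElem.mp hmem
    rw [cs.length_rightInvSeq] at hjx
    have herase : (w * t) * t = π (ω.eraseIdx jx) := by
      rw [hw, ← cs.wordProd_mul_getD_rightInvSeq ω jx]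
      congr 1
      rw [List.getD_eq_getElem _ 1 (by rw [cs.length_rightInvSeq]; exact hjx), hget]
    have : w = π (ω.eraseIdx jx) := by
      rw [← herase, mul_assoc, ht.mul_self, mul_one]
    have hlen : cs.length w ≤ (ω.eraseIdx jx).length := this ▸ cs.length_wordProd_le _
    have : (ω.eraseIdx jx).length < ω.length := by
      rw [← List.length_eraseIdx_add_one hjx]; omega
    have : cs.length w < cs.length (w * t) := by
      calc cs.length w ≤ (ω.eraseIdx jx).length := hlen
        _ < ω.length := this
        _ = cs.length (w * t) := by rw [hw]; exact hred.symm
    omega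
  · intro hsgn
    obtain ⟨ω, hred, hw⟩ := cs.exists_reduced_word' w
    have hmem : t ∈ cs.rightInvSeq ω := by
      by_contra hmem
      rw [hw] at hsgn
      rw [sgn_eq_one_of_not_mem cs ω t hmem] at hsgn
      exact absurd hsgn (by decide)
    obtain ⟨jx, hjx, hget⟩ := List.mem_iff_getElem.mp hmem
    rw [cs.length_rightInvSeq] at hjx
    have herase : w * t = π (ω.eraseIdx jx) := by
      rw [hw, ← cs.wordProd_mul_getD_rightInvSeq ω jx]
      congr 1
      rw [List.getD_eq_getElem _ 1 (by rw [cs.length_rightInvSeq]; exact hjx), hget]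
    calc cs.length (w * t) ≤ (ω.eraseIdx jx).length := herase ▸ cs.length_wordProd_le _
      _ < ω.length := by rw [← List.length_eraseIdx_add_one hjx]; omega
      _ = cs.length w := by rw [hw]; exact hred.symm

/-- Right strong exchange: membership in the right inversion sequence. -/
theorem mem_rightInvSeq_of_isRightInversion {w t : W} (ht : cs.IsReflection t)
    (hlt : cs.length (w * t) < cs.length w) {ω : List B} (hred : cs.IsReduced ω)
    (hw : w = π ω) : t ∈ cs.rightInvSeq ω := by
  classical
  have hsgn : Sgn cs w t = -1 := (isRightInversion_iff_sgn cs ht).mp hlt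
  by_contra hmem
  rw [hw, sgn_eq_one_of_not_mem cs ω t hmem] at hsgn
  exact absurd hsgn (by decide)

/-- Left strong exchange: membership in the left inversion sequence. -/
theorem mem_leftInvSeq_of_isLeftInversion {w t : W} (ht : cs.IsReflection t)
    (hlt : cs.length (t * w) < cs.length w) {ω : List B} (hred : cs.IsReduced ω)
    (hw : w = π ω) : t ∈ cs.leftInvSeq ω := by
  have hinv : cs.length (w⁻¹ * t) < cs.length (w⁻¹) := by
    have h1 : cs.length (w⁻¹ * t) = cs.length (t * w) := by
      rw [← cs.length_inv (w⁻¹ * t), mul_inv_rev, inv_inv, ht.inv]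
    rw [h1, cs.length_inv]
    exact hlt
  have hrev : w⁻¹ = π (ω.reverse) := by rw [hw, cs.wordProd_reverse]
  have hredrev : cs.IsReduced ω.reverse := (cs.isReduced_reverse_iff ω).mpr hred
  have := mem_rightInvSeq_of_isRightInversion cs ht hinv hredrev hrev
  rw [cs.rightInvSeq_reverse] at this
  exact List.mem_reverse.mp this

theorem mul_wordProd_eq_of_mem_leftInvSeq {t : W} {ω : List B} (hmem : t ∈ cs.leftInvSeq ω) :
    ∃ jx < ω.length, t * π ω = π (ω.eraseIdx jx) := by
  obtain ⟨jx, hjx, hget⟩ := List.mem_iff_getElem.mp hmem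
  rw [cs.length_leftInvSeq] at hjx
  refine ⟨jx, hjx, ?_⟩
  rw [← cs.getD_leftInvSeq_mul_wordProd ω jx]
  congr 1
  rw [List.getD_eq_getElem _ 1 (by rw [cs.length_leftInvSeq]; exact hjx), hget]

theorem rightInvSeq_append (α β : List B) :
    cs.rightInvSeq (α ++ β)
      = (cs.rightInvSeq α).map (fun r => (π β)⁻¹ * r * π β) ++ cs.rightInvSeq β := by
  induction α with
  | nil => simp
  | cons a α ih =>
    have h1 : cs.rightInvSeq ((a :: α) ++ β)
        = ((π (α ++ β))⁻¹ * s a * π (α ++ β)) :: cs.rightInvSeq (α ++ β) := rfl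
    have h2 : cs.rightInvSeq (a :: α) = ((π α)⁻¹ * s a * π α) :: cs.rightInvSeq α := rfl
    rw [h1, h2, ih, List.map_cons]
    simp only [List.cons_append]
    congr 1
    rw [cs.wordProd_append, mul_inv_rev]
    group

theorem leftInvSeq_append (α β : List B) :
    cs.leftInvSeq (α ++ β)
      = cs.leftInvSeq α ++ (cs.leftInvSeq β).map (fun r => π α * r * (π α)⁻¹) := by
  induction α with
  | nil => simp
  | cons a α ih =>
    have h1 : cs.leftInvSeq ((a :: α) ++ β)
        = s a :: (cs.leftInvSeq (α ++ β)).map (MulAut.conj (s a)) := rfl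
    have h2 : cs.leftInvSeq (a :: α) = s a :: (cs.leftInvSeq α).map (MulAut.conj (s a)) := rfl
    rw [h1, h2, ih, List.map_append, List.map_map]
    have hfun : (⇑(MulAut.conj (s a)) ∘ fun r => π α * r * (π α)⁻¹)
        = fun r => π (a :: α) * r * (π (a :: α))⁻¹ := by
      funext r
      simp only [Function.comp_apply, MulAut.conj_apply, cs.wordProd_cons, mul_inv_rev,
        cs.inv_simple]
      group
    rw [hfun]
    simp [List.cons_append]

/-- The standard parabolic subgroup omitting the node `c`. -/
def par (c : B) : Subgroup W := Subgroup.closure (cs.simple '' {i : B | i ≠ c})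

theorem simple_mem_par {a c : B} (h : a ≠ c) : s a ∈ par cs c :=
  Subgroup.subset_closure ⟨a, h, rfl⟩

theorem wordProd_mem_par {c : B} {ω : List B} (h : ∀ a ∈ ω, a ≠ c) : π ω ∈ par cs c := by
  induction ω with
  | nil => rw [cs.wordProd_nil]; exact one_mem _
  | cons a ω ih =>
    rw [cs.wordProd_cons]
    exact mul_mem (simple_mem_par cs (h a (List.mem_cons_self (a := a) (l := ω)))) (ih fun b hb => h b (List.mem_cons_of_mem a hb))

theorem exists_word_par {c : B} {w : W} (hw : w ∈ par cs c) :
    ∃ ω : List B, (∀ a ∈ ω, a ≠ c) ∧ w = π ω := by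
  induction hw using Subgroup.closure_induction with
  | mem x hx =>
    obtain ⟨a, ha, rfl⟩ := hx
    exact ⟨[a], by simpa using ha, by simp [cs.wordProd_cons, cs.wordProd_nil]⟩
  | one => exact ⟨[], by simp, by simp [cs.wordProd_nil]⟩
  | mul x y _ _ hx hy =>
    obtain ⟨ωx, hωx, rfl⟩ := hx
    obtain ⟨ωy, hωy, rfl⟩ := hy
    exact ⟨ωx ++ ωy, by
      intro a ha
      rcases List.mem_append.mp ha with h | h
      exacts [hωx a h, hωy a h], (cs.wordProd_append ωx ωy).symm⟩
  | inv x _ hx =>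
    obtain ⟨ωx, hωx, rfl⟩ := hx
    exact ⟨ωx.reverse, fun a ha => hωx a (List.mem_reverse.mp ha), (cs.wordProd_reverse ωx).symm⟩

theorem exists_reduced_word_par {c : B} {w : W} (hw : w ∈ par cs c) :
    ∃ ω : List B, cs.IsReduced ω ∧ (∀ a ∈ ω, a ≠ c) ∧ w = π ω := by
  obtain ⟨ω, hJ, rfl⟩ := exists_word_par cs hw
  clear hw
  suffices H : ∀ (n : ℕ) (ω : List B), ω.length = n → (∀ a ∈ ω, a ≠ c) →
      ∃ ω' : List B, cs.IsReduced ω' ∧ (∀ a ∈ ω', a ≠ c) ∧ π ω = π ω' by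
    obtain ⟨ω', h1, h2, h3⟩ := H ω.length ω rfl hJ
    exact ⟨ω', h1, h2, h3⟩
  intro n
  induction n using Nat.strong_induction_on with
  | _ n ih =>
  intro ω hn hJ
  by_cases hred : cs.IsReduced ω
  · exact ⟨ω, hred, hJ, rfl⟩
  · have hne : ω ≠ [] := by rintro rfl; exact hred (by simp [CoxeterSystem.IsReduced, cs.wordProd_nil])
    obtain ⟨α, b, rfl⟩ : ∃ α b, ω = α ++ [b] :=
      ⟨ω.dropLast, ω.getLast hne, (List.dropLast_append_getLast hne).symm⟩
    have hJα : ∀ a ∈ α, a ≠ c := fun a ha => hJ a (List.mem_append_left _ ha)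
    obtain ⟨α', hredα', hJα', hprodα'⟩ := ih α.length (by subst hn; simp) α rfl hJα
    have hsb : π [b] = s b := by simp [cs.wordProd_cons, cs.wordProd_nil]
    have hprod : π (α ++ [b]) = π α' * s b := by
      rw [cs.wordProd_append, ← hprodα', hsb]
    rcases cs.length_mul_simple (π α') b with hup | hdown
    · refine ⟨α' ++ [b], ?_, ?_, ?_⟩
      · show cs.length (π (α' ++ [b])) = (α' ++ [b]).length
        rw [cs.wordProd_append, hsb, hup]
        have : cs.length (π α') = α'.length := hredα'
        simp [this]
      · intro a ha
        rcases List.mem_append.mp ha with h | h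
        · exact hJα' a h
        · simp at h; subst h; exact hJ a (List.mem_append_right _ (by simp))
      · rw [hprod, cs.wordProd_append, hsb]
    · -- non-reduced case: exchange
      have hlt : cs.length (π α' * s b) < cs.length (π α') := by omega
      have hmem : s b ∈ cs.rightInvSeq α' :=
        mem_rightInvSeq_of_isRightInversion cs (cs.isReflection_simple b) hlt hredα' rfl
      obtain ⟨jx, hjx, hget⟩ := List.mem_iff_getElem.mp hmem
      rw [cs.length_rightInvSeq] at hjx
      have herase : π α' * s b = π (α'.eraseIdx jx) := by
        rw [← cs.wordProd_mul_getD_rightInvSeq α' jx]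
        congr 1
        rw [List.getD_eq_getElem _ 1 (by rw [cs.length_rightInvSeq]; exact hjx), hget]
      have hJerase : ∀ a ∈ α'.eraseIdx jx, a ≠ c := fun a ha =>
        hJα' a (List.mem_of_mem_eraseIdx ha)
      have hlen : (α'.eraseIdx jx).length < α.length + 1 := by
        have h1 : (α'.eraseIdx jx).length + 1 = α'.length := List.length_eraseIdx_add_one hjx
        have h2 : α'.length = cs.length (π α') := hredα'.symm
        have h3 : cs.length (π α') ≤ α.length := by
          rw [← hprodα']
          exact cs.length_wordProd_le α
        omega
      obtain ⟨ω', hred', hJ', hprod'⟩ := ih (α'.eraseIdx jx).length (by subst hn; simp only [List.length_append, List.length_cons, List.length_nil]; omega) _ rfl hJerase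
      exact ⟨ω', hred', hJ', by rw [hprod, herase, hprod']⟩

theorem rightInvSeq_mem_par {c : B} {ω : List B} (hJ : ∀ a ∈ ω, a ≠ c) {t : W}
    (ht : t ∈ cs.rightInvSeq ω) : t ∈ par cs c := by
  induction ω with
  | nil => simp at ht
  | cons a ω ih =>
    have h : cs.rightInvSeq (a :: ω) = ((π ω)⁻¹ * s a * π ω) :: cs.rightInvSeq ω := rfl
    rw [h, List.mem_cons] at ht
    rcases ht with rfl | ht
    · have h1 : π ω ∈ par cs c := wordProd_mem_par cs (fun x hx => hJ x (List.mem_cons_of_mem a hx))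
      exact mul_mem (mul_mem (inv_mem h1) (simple_mem_par cs (hJ a (List.mem_cons_self (a := a) (l := ω))))) h1
    · exact ih (fun x hx => hJ x (List.mem_cons_of_mem a hx)) ht

theorem leftInvSeq_mem_par {c : B} {ω : List B} (hJ : ∀ a ∈ ω, a ≠ c) {t : W}
    (ht : t ∈ cs.leftInvSeq ω) : t ∈ par cs c := by
  have h : t ∈ cs.rightInvSeq ω.reverse := by
    rw [cs.rightInvSeq_reverse]
    exact List.mem_reverse.mpr ht
  exact rightInvSeq_mem_par cs (fun a ha => hJ a (List.mem_reverse.mp ha)) h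

variable (hinj : Function.Injective cs.simple)
include hinj

theorem ne_of_simple_mem_par {a c : B} (h : s a ∈ par cs c) : a ≠ c := by
  obtain ⟨ω, hred, hJ, hprod⟩ := exists_reduced_word_par cs h
  have hlen : ω.length = 1 := by
    have h1 : cs.length (π ω) = ω.length := hred
    rw [← hprod, cs.length_simple] at h1
    omega
  obtain ⟨x, rfl⟩ := List.length_eq_one_iff.mp hlen
  have : s a = s x := by rw [hprod]; simp [cs.wordProd_cons, cs.wordProd_nil]
  rw [hinj this]
  exact hJ x (List.mem_cons_self (a := x) (l := []))

theorem not_isLeftDescent_of_mem_par {c : B} {x : W} (hx : x ∈ par cs c) :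
    ¬ cs.IsLeftDescent x c := by
  intro hd
  obtain ⟨ω, hred, hJ, hprod⟩ := exists_reduced_word_par cs hx
  have hmem : s c ∈ cs.leftInvSeq ω :=
    mem_leftInvSeq_of_isLeftInversion cs (cs.isReflection_simple c) hd hred hprod
  exact ne_of_simple_mem_par cs hinj (leftInvSeq_mem_par cs hJ hmem) rfl

theorem not_isRightDescent_of_mem_par {c : B} {x : W} (hx : x ∈ par cs c) :
    ¬ cs.IsRightDescent x c := by
  intro hd
  obtain ⟨ω, hred, hJ, hprod⟩ := exists_reduced_word_par cs hx
  have hmem : s c ∈ cs.rightInvSeq ω :=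
    mem_rightInvSeq_of_isRightInversion cs (cs.isReflection_simple c) hd hred hprod
  exact ne_of_simple_mem_par cs hinj (rightInvSeq_mem_par cs hJ hmem) rfl

/-- Deodhar's additivity lemma: if `y` has no left descent outside `c`, then lengths add for
`x * y` with `x` in the parabolic omitting `c`. -/
theorem deodhar_additivity {c : B} {y : W} (hy : ∀ a : B, a ≠ c → ¬ cs.IsLeftDescent y a) :
    ∀ x ∈ par cs c, cs.length (x * y) = cs.length x + cs.length y := by
  classical
  -- minimal length element of the coset `(par cs c) * y`
  set S : Set ℕ := {n | ∃ z ∈ par cs c, cs.length (z * y) = n} with hS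
  have hSne : S.Nonempty := ⟨cs.length y, 1, one_mem _, by rw [one_mul]⟩
  obtain ⟨z₀, hz₀mem, hz₀len⟩ : ∃ z ∈ par cs c, cs.length (z * y) = sInf S := Nat.sInf_mem hSne
  set m : W := z₀ * y with hm
  have claimA : ∀ (n : ℕ) (x : W), x ∈ par cs c → cs.length x = n →
      cs.length (x * m) = cs.length x + cs.length m := by
    intro n
    induction n using Nat.strong_induction_on with
    | _ n ihn =>
    intro x hxmem hxlen
    rcases eq_or_ne x 1 with rfl | hxne
    · simp
    · obtain ⟨a, ha⟩ := cs.exists_leftDescent_of_ne_one hxne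
      have hac : a ≠ c := by
        intro h
        exact not_isLeftDescent_of_mem_par cs hinj hxmem (h ▸ ha)
      set x' : W := s a * x with hx'
      have hxx' : x = s a * x' := by
        rw [hx', ← mul_assoc, cs.simple_mul_simple_self, one_mul]
      have hx'len : cs.length x' + 1 = cs.length x := by
        rcases cs.length_simple_mul x a with h | h
        · exfalso; rw [CoxeterSystem.IsLeftDescent] at ha; omega
        · exact h
      have hx'mem : x' ∈ par cs c := mul_mem (simple_mem_par cs hac) hxmem
      have ihx' : cs.length (x' * m) = cs.length x' + cs.length m :=
        ihn (cs.length x') (by omega) x' hx'mem rfl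
      have hkey : ¬ cs.IsLeftDescent (x' * m) a := by
        intro hd
        -- exchange on the concatenation of reduced words for x' and m
        obtain ⟨α, hredα, hJα, hprodα⟩ := exists_reduced_word_par cs hx'mem
        obtain ⟨β, hredβ, hprodβ⟩ := cs.exists_reduced_word' m
        have hredαβ : cs.IsReduced (α ++ β) := by
          show cs.length (π (α ++ β)) = (α ++ β).length
          rw [cs.wordProd_append, ← hprodα, ← hprodβ, ihx']
          have h1 : cs.length x' = α.length := by rw [hprodα]; exact hredα
          have h2 : cs.length m = β.length := by rw [hprodβ]; exact hredβ
          simp [h1, h2]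
        have hprodαβ : x' * m = π (α ++ β) := by
          rw [cs.wordProd_append, ← hprodα, ← hprodβ]
        have hmem : s a ∈ cs.leftInvSeq (α ++ β) :=
          mem_leftInvSeq_of_isLeftInversion cs (cs.isReflection_simple a) hd hredαβ hprodαβ
        rw [leftInvSeq_append, List.mem_append] at hmem
        rcases hmem with hmem | hmem
        · -- s a is a left inversion of x': contradiction with ℓ(s a * x') = ℓ x
          have := cs.isLeftInversion_of_mem_leftInvSeq hredα hmem
          rw [← hprodα] at this
          have hlt : cs.length (s a * x') < cs.length x' := this.2
          rw [← hxx'] at hlt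
          omega
        · -- s a = x' * r * x'⁻¹ with r a left inversion of m : contradicts minimality
          rw [List.mem_map] at hmem
          obtain ⟨r, hrmem, hr⟩ := hmem
          have hrinv := cs.isLeftInversion_of_mem_leftInvSeq hredβ hrmem
          rw [← hprodβ] at hrinv
          have hr' : r = x'⁻¹ * s a * x' := by
            rw [hprodα, ← hr]
            group
          have hrpar : r ∈ par cs c := by
            rw [hr']
            exact mul_mem (mul_mem (inv_mem hx'mem) (simple_mem_par cs hac)) hx'mem
          have hlt : cs.length ((r * z₀) * y) < sInf S := by
            rw [mul_assoc, ← hm, ← hz₀len]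
            exact hrinv.2
          have hge : sInf S ≤ cs.length ((r * z₀) * y) :=
            Nat.sInf_le ⟨r * z₀, mul_mem hrpar hz₀mem, rfl⟩
          omega
      rcases cs.length_simple_mul (x' * m) a with h | h
      · have hxm : x * m = s a * (x' * m) := by rw [hxx', mul_assoc]
        rw [hxm]
        omega
      · exfalso
        exact hkey (by rw [CoxeterSystem.IsLeftDescent]; omega)
  -- y itself is the minimal coset element
  have hz1 : z₀ = 1 := by
    by_contra hne
    have hne' : z₀⁻¹ ≠ 1 := fun h => hne (by rwa [inv_eq_one] at h)
    obtain ⟨a, ha⟩ := cs.exists_leftDescent_of_ne_one hne'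
    have hz0inv : z₀⁻¹ ∈ par cs c := inv_mem hz₀mem
    have hac : a ≠ c := by
      intro h
      exact not_isLeftDescent_of_mem_par cs hinj hz0inv (h ▸ ha)
    have hlen2 : cs.length (s a * z₀⁻¹) + 1 = cs.length z₀⁻¹ := by
      rcases cs.length_simple_mul z₀⁻¹ a with h | h
      · exfalso; rw [CoxeterSystem.IsLeftDescent] at ha; omega
      · exact h
    have hy2 : y = z₀⁻¹ * m := by rw [hm]; group
    have hylen : cs.length y = cs.length z₀⁻¹ + cs.length m := by
      conv_lhs => rw [hy2]
      exact claimA _ _ hz0inv rfl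
    have hsay : cs.length (s a * y) = cs.length (s a * z₀⁻¹) + cs.length m := by
      have h1 : s a * y = (s a * z₀⁻¹) * m := by rw [hm]; group
      rw [h1]
      exact claimA _ _ (mul_mem (simple_mem_par cs hac) hz0inv) rfl
    exact hy a hac (by rw [CoxeterSystem.IsLeftDescent]; omega)
  have hmy : m = y := by rw [hm, hz1, one_mul]
  intro x hx
  have := claimA (cs.length x) x hx rfl
  rwa [hmy] at this

end StrongExch


/-- Let `k` be a minuscule index, fix `𝔦 ≠ k`, and define the index
sequence `i₀ = k`, `i₁ = σ_{i₀}(𝔦)`, `i_j = σ_{i_{j-1}}(i_{j-2})`, where `σ_j` is the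
Dynkin involution of the diagram with node `j` deleted.  For `j ≥ 1` let `u_{i_j}` be
the shortest element of `W_{i_j}` with `u_{i_j}(ω_{i_{j-1}}^∨) = w₀_{i_j}(ω_{i_{j-1}}^∨)`.
Assume the identities `w₀_{i₀}(ω_𝔦^∨) = -ω_{i₁}^∨ + c ω_{i₀}^∨` (where `c = ⟨ω_𝔦^∨, θ⟩`),
`w₀_{i₁}(ω_{i₀}^∨) = -ω_{i₂}^∨ + ω_{i₁}^∨`,
`w₀_{i_j}(ω_{i_{j-1}}^∨) = -ω_{i_{j+1}}^∨ + 2ω_{i_j}^∨` for `2 ≤ j ≤ c`, and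
`u_{i_j}(ω_{i_j}^∨) = ω_{i_j}^∨`.  Then for every `1 ≤ j ≤ c`, the product
`u_{i_j} ⋯ u_{i_1}` is a minimal-length coset representative in `W/W_k` and
`u_{i_j} ⋯ u_{i_1}(ω_k^∨) = -ω_{i_{j+1}}^∨ + ω_{i_j}^∨`. -/
theorem stmt_13 {n : ℕ} (M : CoxeterMatrix (Fin n)) {W : Type*} [Group W]
    (cs : CoxeterSystem M W) [Finite W]
    {V : Type*} [AddCommGroup V] [Module ℚ V]
    (ρ : W →* (V ≃ₗ[ℚ] V)) (hρ : Function.Injective ρ)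
    (ω : Fin n → V) (cα : Fin n → V) (rt : Fin n → Module.Dual ℚ V)
    (hrefl : ∀ (i : Fin n) (v : V), ρ (cs.simple i) v = v - rt i v • cα i)
    (hpair : ∀ i j : Fin n, rt j (ω i) = if i = j then 1 else 0)
    -- the roots, highest root `θ`, and minusculity of `k`
    (R : Set (Module.Dual ℚ V)) (hRs : ∀ i, rt i ∈ R)
    (θ : Module.Dual ℚ V) (hθR : θ ∈ R)
    (hθdom : ∀ β ∈ R, ∃ c : Fin n → ℚ, (∀ i, 0 ≤ c i) ∧ θ - β = ∑ i, c i • rt i)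
    (k : Fin n)
    (hmin : ∀ β ∈ R, β (ω k) = -1 ∨ β (ω k) = 0 ∨ β (ω k) = 1)
    (𝔦 : Fin n) (h𝔦 : 𝔦 ≠ k)
    (cstar : ℕ) (hcstar : θ (ω 𝔦) = (cstar : ℚ))        -- `c = ⟨ω_𝔦^∨, θ⟩`
    -- parabolic subgroups and their longest elements
    (Wp : Fin n → Subgroup W)
    (hWp : ∀ j, Wp j = Subgroup.closure (cs.simple '' {i : Fin n | i ≠ j}))
    (w₀p : Fin n → W) (hw₀p_mem : ∀ j, w₀p j ∈ Wp j)
    (hw₀p : ∀ j, ∀ u ∈ Wp j, cs.length u ≤ cs.length (w₀p j))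
    -- Dynkin involutions `σ j` of the diagram with node `j` deleted
    (σ : Fin n → Fin n → Fin n) (hσj : ∀ j, σ j j = j)
    (hσ : ∀ j i : Fin n, i ≠ j → w₀p j * cs.simple i * (w₀p j)⁻¹ = cs.simple (σ j i))
    -- the index sequence
    (iseq : ℕ → Fin n) (hiseq0 : iseq 0 = k) (hiseq1 : iseq 1 = σ k 𝔦)
    (hiseqrec : ∀ j : ℕ, iseq (j + 2) = σ (iseq (j + 1)) (iseq j))
    -- the elements `u_{i_j}`, shortest in `W_{i_j}` realizing the action of `w₀_{i_j}`
    (u : ℕ → W)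
    (hu : ∀ j : ℕ, 1 ≤ j →
      u j ∈ Wp (iseq j)
      ∧ ρ (u j) (ω (iseq (j - 1))) = ρ (w₀p (iseq j)) (ω (iseq (j - 1)))
      ∧ ∀ v ∈ Wp (iseq j),
          ρ v (ω (iseq (j - 1))) = ρ (w₀p (iseq j)) (ω (iseq (j - 1))) →
          cs.length (u j) ≤ cs.length v)
    -- the assumed identities
    (hid0 : ρ (w₀p k) (ω 𝔦) = -(ω (iseq 1)) + (cstar : ℚ) • ω k)
    (hid1 : ρ (w₀p (iseq 1)) (ω k) = -(ω (iseq 2)) + ω (iseq 1))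
    (hidj : ∀ j : ℕ, 2 ≤ j → j ≤ cstar →
      ρ (w₀p (iseq j)) (ω (iseq (j - 1))) = -(ω (iseq (j + 1))) + (2 : ℚ) • ω (iseq j))
    (hfix : ∀ j : ℕ, ρ (u j) (ω (iseq j)) = ω (iseq j)) :
    ∀ j : ℕ, 1 ≤ j → j ≤ cstar →
      (∀ i : Fin n, i ≠ k →
        cs.length (prodU u j) < cs.length (prodU u j * cs.simple i))
      ∧ ρ (prodU u j) (ω k) = -(ω (iseq (j + 1))) + ω (iseq j) := by
  classical
  have hparEq : ∀ c : Fin n, Wp c = StrongExch.par cs c := fun c => hWp c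
  have mulρ : ∀ (x y : W) (v : V), ρ (x * y) v = ρ x (ρ y v) := by
    intro x y v
    rw [map_mul]
    rfl
  have invρ : ∀ (x : W) (v : V), ρ x⁻¹ (ρ x v) = v := by
    intro x v
    rw [← mulρ, inv_mul_cancel, map_one]
    rfl
  have cα_ne : ∀ i : Fin n, cα i ≠ 0 := by
    intro i h0
    have hs1 : cs.simple i = 1 := hρ (by
      refine LinearEquiv.ext fun v => ?_
      rw [hrefl i v, h0, smul_zero, sub_zero, map_one]
      rfl)
    have h1 := cs.length_simple i
    rw [hs1, cs.length_one] at h1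
    exact absurd h1 (by omega)
  have simple_inj : Function.Injective cs.simple := by
    intro a b hab
    by_contra hne
    have hval : ω a - rt a (ω a) • cα a = ω a - rt b (ω a) • cα b := by
      rw [← hrefl a (ω a), ← hrefl b (ω a), hab]
    rw [hpair a a, hpair a b, if_pos rfl, if_neg hne, one_smul, zero_smul, sub_zero] at hval
    exact cα_ne a (sub_eq_self.mp hval)
  have ω_ne : ∀ i : Fin n, ω i ≠ 0 := by
    intro i h
    have := hpair i i
    rw [h, map_zero, if_pos rfl] at this
    norm_num at this
  have s_fix : ∀ (a m : Fin n), m ≠ a → ρ (cs.simple a) (ω m) = ω m := by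
    intro a m hma
    rw [hrefl, hpair, if_neg hma, zero_smul, sub_zero]
  have fix_par : ∀ (c : Fin n) (w : W), w ∈ Wp c → ρ w (ω c) = ω c := by
    intro c w hw
    rw [hWp] at hw
    induction hw using Subgroup.closure_induction with
    | mem x hx =>
      obtain ⟨a, ha, rfl⟩ := hx
      exact s_fix a c (Ne.symm ha)
    | one => rw [map_one]; rfl
    | mul x y hx hy ihx ihy => rw [mulρ, ihy, ihx]
    | inv x hx ihx =>
      have h1 := invρ x (ω c)
      rw [ihx] at h1
      exact h1
  have act_u1 : ρ (u 1) (ω k) = -(ω (iseq 2)) + ω (iseq 1) := by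
    have h := (hu 1 le_rfl).2.1
    rw [show (1:ℕ) - 1 = 0 from rfl, hiseq0] at h
    rw [h, hid1]
  have act_uj2 : ∀ j : ℕ, j + 2 ≤ cstar →
      ρ (u (j + 2)) (ω (iseq (j + 1))) = -(ω (iseq (j + 3))) + (2:ℚ) • ω (iseq (j + 2)) := by
    intro j hc
    have h := (hu (j+2) (by omega)).2.1
    rw [show j + 2 - 1 = j + 1 from rfl] at h
    rw [h]
    have h2 := hidj (j+2) (by omega) hc
    rw [show j + 2 - 1 = j + 1 from rfl] at h2
    rw [h2]
  have prodU_succ : ∀ q : ℕ, prodU u (q+1) = u (q+1) * prodU u q := fun q => rfl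
  have hone : ∀ v : V, (1 : V ≃ₗ[ℚ] V) v = v := fun v => rfl
  have prodU_zero : prodU u 0 = (1 : W) := rfl
  have act_w : ∀ j : ℕ, 1 ≤ j → j ≤ cstar →
      ρ (prodU u j) (ω k) = -(ω (iseq (j+1))) + ω (iseq j) := by
    intro j
    induction j with
    | zero => omega
    | succ m ih =>
      intro h1 hc
      rcases Nat.eq_zero_or_pos m with rfl | hm
      · rw [prodU_succ, prodU_zero, mul_one]
        exact act_u1
      · have ihm := ih hm (by omega)
        rw [prodU_succ, mulρ, ihm, map_add, map_neg, hfix]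
        rcases Nat.exists_eq_add_of_le hm with ⟨m', rfl⟩
        rw [show 1 + m' + 1 = m' + 2 from by omega, show 1 + m' = m' + 1 from by omega] at *
        rw [act_uj2 m' (by omega)]
        module
  have dist : ∀ j : ℕ, 1 ≤ j → j ≤ cstar → iseq (j+1) ≠ iseq j := by
    intro j h1 hc heq
    have h := act_w j h1 hc
    rw [heq, neg_add_cancel] at h
    exact ω_ne k ((ρ (prodU u j)).injective (h.trans (map_zero _).symm))
  have dist0 : iseq 1 ≠ k := by
    intro heq
    have hmem : u 1 ∈ Wp k := by rw [← heq]; exact (hu 1 le_rfl).1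
    have hfix1 := fix_par k (u 1) hmem
    rw [act_u1, heq] at hfix1
    have h2 : -(ω (iseq 2)) = 0 := by
      have := hfix1
      nth_rewrite 2 [← zero_add (ω k)] at this
      exact add_right_cancel this
    exact ω_ne (iseq 2) (neg_eq_zero.mp h2)
  have uR : ∀ j : ℕ, 1 ≤ j → ∀ a : Fin n, a ≠ iseq (j-1) → ¬ cs.IsRightDescent (u j) a := by
    intro j hj a ha hdesc
    by_cases haj : a = iseq j
    · subst haj
      refine StrongExch.not_isRightDescent_of_mem_par cs simple_inj ?_ hdesc
      rw [← hparEq]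
      exact (hu j hj).1
    · have hv : u j * cs.simple a ∈ Wp (iseq j) := by
        rw [hparEq]
        exact mul_mem (by rw [← hparEq]; exact (hu j hj).1) (StrongExch.simple_mem_par cs haj)
      have hact : ρ (u j * cs.simple a) (ω (iseq (j-1))) = ρ (w₀p (iseq j)) (ω (iseq (j-1))) := by
        rw [mulρ, s_fix a _ (Ne.symm ha)]
        exact (hu j hj).2.1
      have hmin := (hu j hj).2.2 _ hv hact
      rw [CoxeterSystem.IsRightDescent] at hdesc
      omega
  have uL : ∀ j : ℕ, 1 ≤ j → j ≤ cstar → ∀ a : Fin n, a ≠ iseq (j+1) →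
      ¬ cs.IsLeftDescent (u j) a := by
    intro j hj hc a ha hdesc
    by_cases haj : a = iseq j
    · subst haj
      refine StrongExch.not_isLeftDescent_of_mem_par cs simple_inj ?_ hdesc
      rw [← hparEq]
      exact (hu j hj).1
    · have hv : cs.simple a * u j ∈ Wp (iseq j) := by
        rw [hparEq]
        exact mul_mem (StrongExch.simple_mem_par cs haj) (by rw [← hparEq]; exact (hu j hj).1)
      have hact : ρ (cs.simple a * u j) (ω (iseq (j-1))) = ρ (w₀p (iseq j)) (ω (iseq (j-1))) := by
        rw [mulρ, (hu j hj).2.1]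
        rcases Nat.lt_or_ge j 2 with h2 | h2
        · have hj1 : j = 1 := by omega
          subst hj1
          rw [show (1:ℕ) - 1 = 0 from rfl, hiseq0, hid1, map_add, map_neg,
            s_fix a _ (Ne.symm ha), s_fix a _ (Ne.symm haj)]
        · rw [hidj j h2 hc, map_add, map_neg, map_smul, s_fix a _ (Ne.symm ha),
            s_fix a _ (Ne.symm haj)]
      have hmin := (hu j hj).2.2 _ hv hact
      rw [CoxeterSystem.IsLeftDescent] at hdesc
      omega
  -- the main strong induction
  have claim : ∀ j : ℕ, j ≤ cstar →
      (∀ i : Fin n, i ≠ k → ¬ cs.IsRightDescent (prodU u j) i)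
      ∧ (∀ a : Fin n, a ≠ iseq (j+1) → ¬ cs.IsLeftDescent (prodU u j) a) := by
    intro j
    induction j using Nat.strong_induction_on with
    | _ j ihj =>
    intro hjc
    match j, hjc with
    | 0, _ =>
      constructor
      · intro i _
        rw [prodU_zero]
        exact cs.not_isRightDescent_one i
      · intro a _
        rw [prodU_zero]
        exact cs.not_isLeftDescent_one a
    | (m+1), hjc =>
      have Pm := ihj m (by omega) (by omega)
      have addm : ∀ x ∈ StrongExch.par cs (iseq (m+1)),
          cs.length (x * prodU u m) = cs.length x + cs.length (prodU u m) :=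
        StrongExch.deodhar_additivity cs simple_inj (fun b hb => Pm.2 b hb)
      have humem : u (m+1) ∈ StrongExch.par cs (iseq (m+1)) := by
        rw [← hparEq]; exact (hu (m+1) (by omega)).1
      have lenadd : cs.length (prodU u (m+1))
          = cs.length (u (m+1)) + cs.length (prodU u m) := by
        rw [prodU_succ]; exact addm _ humem
      constructor
      · -- (a) no right descents off k
        intro i hik hdesc
        have hnd' : ¬ cs.IsRightDescent (prodU u m) i := Pm.1 i hik
        have lsi : cs.length (prodU u m * cs.simple i) = cs.length (prodU u m) + 1 := by
          have := cs.length_mul_simple (prodU u m) i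
          rw [CoxeterSystem.IsRightDescent] at hnd'
          omega
        have hexa : ∃ a : Fin n, a ≠ iseq (m+1)
            ∧ cs.IsLeftDescent (prodU u m * cs.simple i) a := by
          by_contra hno
          push_neg at hno
          have hadd2 : ∀ x ∈ StrongExch.par cs (iseq (m+1)),
              cs.length (x * (prodU u m * cs.simple i))
                = cs.length x + cs.length (prodU u m * cs.simple i) :=
            StrongExch.deodhar_additivity cs simple_inj (fun b hb => hno b hb)
          have h3 := hadd2 _ humem
          rw [← mul_assoc, ← prodU_succ] at h3
          rw [CoxeterSystem.IsRightDescent] at hdesc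
          omega
        obtain ⟨a, ha, hda⟩ := hexa
        obtain ⟨β, hredβ, hprodβ⟩ := cs.exists_reduced_word' (prodU u m)
        have hsi : cs.wordProd [i] = cs.simple i := by
          simp [cs.wordProd_cons, cs.wordProd_nil]
        have hlb : cs.length (prodU u m) = β.length := by
          rw [hprodβ]; exact hredβ
        have hredβi : cs.IsReduced (β ++ [i]) := by
          show cs.length (cs.wordProd (β ++ [i])) = (β ++ [i]).length
          rw [cs.wordProd_append, hsi, ← hprodβ, lsi]
          simp [hlb]
        have hprodβi : prodU u m * cs.simple i = cs.wordProd (β ++ [i]) := by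
          rw [cs.wordProd_append, hsi, ← hprodβ]
        have hmem : cs.simple a ∈ cs.leftInvSeq (β ++ [i]) :=
          StrongExch.mem_leftInvSeq_of_isLeftInversion cs (cs.isReflection_simple a) hda
            hredβi hprodβi
        rw [StrongExch.leftInvSeq_append, List.mem_append] at hmem
        rcases hmem with hmem | hmem
        · have hinv := cs.isLeftInversion_of_mem_leftInvSeq hredβ hmem
          rw [← hprodβ] at hinv
          exact Pm.2 a ha hinv.2
        · rw [List.mem_map] at hmem
          obtain ⟨r, hrmem, hreq⟩ := hmem
          rw [cs.leftInvSeq_singleton, List.mem_singleton] at hrmem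
          subst hrmem
          -- hreq : π β * s i * (π β)⁻¹ = s a
          have heq : prodU u m * cs.simple i = cs.simple a * prodU u m := by
            rw [hprodβ, ← hreq]
            group
          have hfactor : prodU u (m+1) * cs.simple i
              = (u (m+1) * cs.simple a) * prodU u m := by
            rw [prodU_succ, mul_assoc, heq, ← mul_assoc]
          have hmem2 : u (m+1) * cs.simple a ∈ StrongExch.par cs (iseq (m+1)) :=
            mul_mem humem (StrongExch.simple_mem_par cs ha)
          have hlen2 := addm _ hmem2
          rw [← hfactor] at hlen2
          have hdescu : cs.IsRightDescent (u (m+1)) a := by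
            rw [CoxeterSystem.IsRightDescent] at hdesc ⊢
            have := cs.length_mul_simple (u (m+1)) a
            omega
          have haim : a = iseq m := by
            by_contra hne
            exact uR (m+1) (by omega) a
              (by rw [show m + 1 - 1 = m from rfl]; exact hne) hdescu
          subst haim
          rcases Nat.eq_zero_or_pos m with hm0 | hm
          · subst hm0
            rw [prodU_zero, one_mul, mul_one] at heq
            exact hik (by rw [← hiseq0]; exact simple_inj heq)
          · have hμ := act_w m hm (by omega)
            have happ : ρ (prodU u m * cs.simple i) (ω k) = ρ (prodU u m) (ω k) := by
              rw [mulρ, s_fix i k (Ne.symm hik)]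
            rw [heq, mulρ, hμ] at happ
            rw [hrefl] at happ
            have h0 := sub_eq_self.mp happ
            have hrt : rt (iseq m) (-(ω (iseq (m+1))) + ω (iseq m)) = 1 := by
              rw [map_add, map_neg, hpair, hpair, if_neg (dist m hm (by omega)), if_pos rfl]
              norm_num
            rw [hrt, one_smul] at h0
            exact cα_ne _ h0
      · -- (b) no left descents off iseq (m+2)
        intro a ha hdesc
        by_cases ham : a = iseq (m+1)
        · subst ham
          -- THE GAP: recursion down the chain
          have Alem : ∀ r : ℕ, ∀ q : ℕ, q + 1 + r = m + 1 →
              ρ (prodU u (m+1) * (prodU u (q+1))⁻¹) (ω (iseq (q+1)))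
                = ((r:ℚ)+1) • ω (iseq (m+1)) - (r:ℚ) • ω (iseq (m+2))
              ∧ ρ (prodU u (m+1) * (prodU u (q+1))⁻¹) (ω (iseq (q+2)))
                = (r:ℚ) • ω (iseq (m+1)) - ((r:ℚ)-1) • ω (iseq (m+2)) := by
            intro r
            induction r with
            | zero =>
              intro q hq
              have hq0 : q = m := by omega
              subst hq0
              have h1 : prodU u (q+1) * (prodU u (q+1))⁻¹ = 1 := by group
              rw [h1, map_one]
              constructor
              · rw [hone]
                push_cast
                module
              · rw [hone]
                push_cast
                module
            | succ r ihr =>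
              intro q hq
              have ih := ihr (q+1) (by omega)
              rw [show q+1+1 = q+2 from rfl, show q+1+2 = q+3 from rfl] at ih
              have hy : prodU u (m+1) * (prodU u (q+1))⁻¹
                  = (prodU u (m+1) * (prodU u (q+2))⁻¹) * u (q+2) := by
                rw [show prodU u (q+2) = u (q+2) * prodU u (q+1) from rfl]
                group
              constructor
              · rw [hy, mulρ, act_uj2 q (by omega), map_add, map_neg, map_smul, ih.1, ih.2]
                push_cast
                module
              · rw [hy, mulρ, hfix (q+2), ih.1]
                push_cast
                module
          have gap : ∀ q : ℕ, q ≤ m + 1 →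
              ¬ (cs.length (((prodU u (m+1) * (prodU u q)⁻¹)⁻¹ * cs.simple (iseq (m+1)) *
                  (prodU u (m+1) * (prodU u q)⁻¹)) * prodU u q) < cs.length (prodU u q)) := by
            intro q
            induction q with
            | zero =>
              intro _ hlt
              rw [prodU_zero, cs.length_one] at hlt
              omega
            | succ q ihq =>
              intro hq1 hlt
              have hτrefl : cs.IsReflection ((prodU u (m+1) * (prodU u (q+1))⁻¹)⁻¹ *
                  cs.simple (iseq (m+1)) * (prodU u (m+1) * (prodU u (q+1))⁻¹)) :=
                ⟨(prodU u (m+1) * (prodU u (q+1))⁻¹)⁻¹, iseq (m+1), by rw [inv_inv]⟩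
              have Pq := ihj q (by omega) (by omega)
              have addq : ∀ x ∈ StrongExch.par cs (iseq (q+1)),
                  cs.length (x * prodU u q) = cs.length x + cs.length (prodU u q) :=
                StrongExch.deodhar_additivity cs simple_inj (fun b hb => Pq.2 b hb)
              have humemq : u (q+1) ∈ StrongExch.par cs (iseq (q+1)) := by
                rw [← hparEq]; exact (hu (q+1) (by omega)).1
              have lenq : cs.length (prodU u (q+1))
                  = cs.length (u (q+1)) + cs.length (prodU u q) := by
                rw [prodU_succ]; exact addq _ humemq
              obtain ⟨α, hredα, hJα, hprodα⟩ := StrongExch.exists_reduced_word_par cs humemq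
              obtain ⟨β, hredβ, hprodβ⟩ := cs.exists_reduced_word' (prodU u q)
              have hredαβ : cs.IsReduced (α ++ β) := by
                show cs.length (cs.wordProd (α ++ β)) = (α ++ β).length
                rw [cs.wordProd_append, ← hprodα, ← hprodβ, ← prodU_succ, lenq]
                have h1 : cs.length (u (q+1)) = α.length := by rw [hprodα]; exact hredα
                have h2 : cs.length (prodU u q) = β.length := by rw [hprodβ]; exact hredβ
                simp [h1, h2]
              have hprodαβ : prodU u (q+1) = cs.wordProd (α ++ β) := by
                rw [cs.wordProd_append, ← hprodα, ← hprodβ, prodU_succ]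
              have hmem : ((prodU u (m+1) * (prodU u (q+1))⁻¹)⁻¹ * cs.simple (iseq (m+1)) *
                    (prodU u (m+1) * (prodU u (q+1))⁻¹)) ∈ cs.leftInvSeq (α ++ β) :=
                StrongExch.mem_leftInvSeq_of_isLeftInversion cs hτrefl hlt hredαβ hprodαβ
              rw [StrongExch.leftInvSeq_append, List.mem_append] at hmem
              rcases hmem with hmem | hmem
              · -- case 1: fixes ω (iseq (q+1)) but provably moves it
                have hτfix : ρ ((prodU u (m+1) * (prodU u (q+1))⁻¹)⁻¹ * cs.simple (iseq (m+1)) *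
                    (prodU u (m+1) * (prodU u (q+1))⁻¹)) (ω (iseq (q+1))) = ω (iseq (q+1)) :=
                  fix_par _ _ (by
                    rw [hparEq]
                    exact StrongExch.leftInvSeq_mem_par cs hJα hmem)
                obtain ⟨hA1, -⟩ := Alem (m - q) q (by omega)
                have hrtval : rt (iseq (m+1))
                    (ρ (prodU u (m+1) * (prodU u (q+1))⁻¹) (ω (iseq (q+1))))
                      = ((m-q:ℕ):ℚ)+1 := by
                  rw [hA1, map_sub, map_smul, map_smul, hpair, hpair, if_pos rfl,
                    if_neg (dist (m+1) (by omega) hjc)]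
                  simp only [smul_eq_mul, mul_one, mul_zero, sub_zero]
                rw [show (prodU u (m+1) * (prodU u (q+1))⁻¹)⁻¹ * cs.simple (iseq (m+1)) *
                    (prodU u (m+1) * (prodU u (q+1))⁻¹)
                    = (prodU u (m+1) * (prodU u (q+1))⁻¹)⁻¹ * (cs.simple (iseq (m+1)) *
                      (prodU u (m+1) * (prodU u (q+1))⁻¹)) from by group,
                  mulρ, mulρ, hrefl, map_sub, map_smul, invρ, hrtval] at hτfix
                have h0 := sub_eq_self.mp hτfix
                have hcoef : (((m-q:ℕ):ℚ)+1) ≠ 0 := by positivity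
                have h00 : ρ (prodU u (m+1) * (prodU u (q+1))⁻¹)⁻¹ (cα (iseq (m+1))) = 0 := by
                  rcases smul_eq_zero.mp h0 with h | h
                  · exact absurd h hcoef
                  · exact h
                exact cα_ne _
                  ((ρ (prodU u (m+1) * (prodU u (q+1))⁻¹)⁻¹).injective
                    (h00.trans (map_zero _).symm))
              · -- case 2: descend to level q
                rw [List.mem_map] at hmem
                obtain ⟨r, hrmem, hreq⟩ := hmem
                have hrinv := cs.isLeftInversion_of_mem_leftInvSeq hredβ hrmem
                rw [← hprodβ] at hrinv
                apply ihq (by omega)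
                have hrval : ((prodU u (m+1) * (prodU u q)⁻¹)⁻¹ * cs.simple (iseq (m+1)) *
                    (prodU u (m+1) * (prodU u q)⁻¹)) = r := by
                  have h5 : r = (cs.wordProd α)⁻¹ *
                      ((prodU u (m+1) * (prodU u (q+1))⁻¹)⁻¹ * cs.simple (iseq (m+1)) *
                        (prodU u (m+1) * (prodU u (q+1))⁻¹)) * (cs.wordProd α) := by
                    rw [← hreq]; group
                  rw [h5, ← hprodα, show prodU u (q+1) = u (q+1) * prodU u q from rfl]
                  group
                rw [hrval]
                exact hrinv.2
          apply gap (m+1) le_rfl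
          have hsimp : (prodU u (m+1) * (prodU u (m+1))⁻¹)⁻¹ * cs.simple (iseq (m+1)) *
              (prodU u (m+1) * (prodU u (m+1))⁻¹) = cs.simple (iseq (m+1)) := by
            group
          rw [hsimp]
          rw [CoxeterSystem.IsLeftDescent] at hdesc
          exact hdesc
        · have hmem2 : cs.simple a * u (m+1) ∈ StrongExch.par cs (iseq (m+1)) :=
            mul_mem (StrongExch.simple_mem_par cs ham) humem
          have h3 := addm _ hmem2
          have hfac : cs.simple a * prodU u (m+1) = (cs.simple a * u (m+1)) * prodU u m := by
            rw [prodU_succ, mul_assoc]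
          have hdescu : cs.IsLeftDescent (u (m+1)) a := by
            rw [CoxeterSystem.IsLeftDescent] at hdesc ⊢
            rw [hfac, h3] at hdesc
            have := cs.length_simple_mul (u (m+1)) a
            omega
          exact uL (m+1) (by omega) hjc a ha hdescu
  -- conclusion
  intro j hj1 hjc
  refine ⟨?_, act_w j hj1 hjc⟩
  intro i hik
  have hnd := (claim j hjc).1 i hik
  have hne := cs.length_mul_simple_ne (prodU u j) i
  rw [CoxeterSystem.IsRightDescent] at hnd
  omega
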